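/- Set C = (α₁β₀−α₀β₁, α₁β₂−α₂β₁, 0) and write C·x = (α₁β₀−α₀β₁)x₀ + (α₁β₂−α₂β₁)x₁. The determinant of the 3×3 Jacobian matrix (∂Gᵢ/∂xⱼ)₀≤i,j≤2 of the map G equals −2·x₀·(B·x)·(C·x) for every x = (x₀,x₁,x₂) ∈ ℂ³. -/

import Mathlib

lemma fd_coord (i : Fin 3) (x : Fin 3 → ℂ) :
    fderiv ℂ (fun y : Fin 3 → ℂ => y i) x = ContinuousLinearMap.proj i :=
  (ContinuousLinearMap.proj (R := ℂ) (φ := fun _ : Fin 3 => ℂ) i).fderiv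

/-- With `A = (α₀, α₂, −β₀)`, `B = (−α₁, 0, β₁)`, `C = (α₁β₀−α₀β₁, α₁β₂−α₂β₁, 0)`,
the determinant of the Jacobian matrix `(∂Gᵢ/∂xⱼ)` of
`G(x₀,x₁,x₂) = (x₀(B·x), x₀(A·x) − β₂x₁x₂, x₁(B·x))` equals `−2·x₀·(B·x)·(C·x)`. -/
theorem stmt2 (a0 a1 a2 b0 b1 b2 : ℂ) (x : Fin 3 → ℂ) :
    Matrix.det (Matrix.of fun i j : Fin 3 =>
        fderiv ℂ (fun y : Fin 3 → ℂ =>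
          ![y 0 * (-a1 * y 0 + b1 * y 2),
            y 0 * (a0 * y 0 + a2 * y 1 - b0 * y 2) - b2 * y 1 * y 2,
            y 1 * (-a1 * y 0 + b1 * y 2)] i) x (Pi.single j 1)) =
      -2 * x 0 * (-a1 * x 0 + b1 * x 2) *
        ((a1 * b0 - a0 * b1) * x 0 + (a1 * b2 - a2 * b1) * x 1) := by
  rw [Matrix.det_fin_three]
  simp only [Matrix.of_apply, Matrix.cons_val_zero, Matrix.cons_val_one, Matrix.head_cons,
    Matrix.cons_val_two, Matrix.tail_cons]
  simp (disch := fun_prop) only [fderiv_fun_sub, fderiv_fun_add, fderiv_fun_mul, fderiv_const_mul, fd_coord,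
    ContinuousLinearMap.add_apply, ContinuousLinearMap.sub_apply, ContinuousLinearMap.smul_apply,
    ContinuousLinearMap.coe_smul', Pi.smul_apply, ContinuousLinearMap.proj_apply, smul_eq_mul,
    fderiv_fun_const, Pi.zero_apply, ContinuousLinearMap.zero_apply]
  simp [Pi.single_apply]
  ring
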